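/- Let d ≥ 2, let G be a d-regular tree, let v₁ be a vertex and let v₂ be a vertex adjacent to v₁. For n ≥ 1, the number of closed walks of length 2n in G starting and ending at v₁ equals d times the number of walks of length 2n - 1 in G starting at v₁ and ending at v₂. -/

import Mathlib

/-- The count of walks of length `ℓ` between two vertices at distance `k` in a `d`-regular
tree, defined by recursion. -/
def gcount (d : ℕ) : ℕ → ℕ → ℕ
  | 0, 0 => 1
  | 0, _ + 1 => 0
  | ℓ + 1, 0 => d * gcount d ℓ 1
  | ℓ + 1, k + 1 => gcount d ℓ k + (d - 1) * gcount d ℓ (k + 2)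

/-- Walks of length `ℓ+1` correspond to a first step plus a walk of length `ℓ`. -/
def consEquiv {V : Type*} (G : SimpleGraph V) (u v : V) (ℓ : ℕ) :
    {p : G.Walk u v // p.length = ℓ + 1} ≃
      Σ w : G.neighborSet u, {p : G.Walk (w : V) v // p.length = ℓ} where
  toFun := fun ⟨p, hp⟩ =>
    match p, hp with
    | .nil, hp => absurd hp (by simp)
    | .cons h q, hp => ⟨⟨_, h⟩, ⟨q, by simpa using hp⟩⟩
  invFun := fun ⟨⟨w, hw⟩, ⟨q, hq⟩⟩ => ⟨.cons hw q, congrArg (· + 1) hq⟩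
  left_inv := fun ⟨p, hp⟩ => by
    cases p with
    | nil => simp at hp
    | cons h q => rfl
  right_inv := fun ⟨⟨w, hw⟩, ⟨q, hq⟩⟩ => rfl

/-- In a tree, a vertex `u ≠ v` has exactly one neighbor closer to `v`; all other neighbors
are farther. -/
lemma exists_toward {V : Type*} {G : SimpleGraph V} (hconn : G.Connected)
    (hacyc : G.IsAcyclic) {u v : V} (hne : u ≠ v) :
    ∃ w₀, G.Adj u w₀ ∧ G.dist w₀ v = G.dist u v - 1 ∧
      ∀ w, G.Adj u w → w ≠ w₀ → G.dist w v = G.dist u v + 1 := by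
  classical
  obtain ⟨p, hp, hlen⟩ := hconn.exists_path_of_dist u v
  cases p with
  | nil => exact absurd rfl hne
  | @cons _ w₀ _ h p' =>
    have hlen' : p'.length + 1 = G.dist u v := by simpa using hlen
    have hd1 : G.dist u w₀ = 1 := SimpleGraph.dist_eq_one_iff_adj.mpr h
    have hle : G.dist w₀ v ≤ p'.length := SimpleGraph.dist_le p'
    have htri : G.dist u v ≤ G.dist u w₀ + G.dist w₀ v := hconn.dist_triangle
    have hw₀ : G.dist w₀ v = G.dist u v - 1 := by omega
    refine ⟨w₀, h, hw₀, fun w hw hwne => ?_⟩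
    have hupper : G.dist w v ≤ G.dist u v + 1 := by
      have : G.dist w v ≤ G.dist w u + G.dist u v := hconn.dist_triangle
      have : G.dist w u = 1 := SimpleGraph.dist_eq_one_iff_adj.mpr hw.symm
      omega
    have hlower : ¬ G.dist w v ≤ G.dist u v := by
      intro hc
      obtain ⟨q, hq, hqlen⟩ := hconn.exists_path_of_dist w v
      by_cases hu : u ∈ q.support
      · -- the path from w to v passes through u, too long
        have hsplit := q.take_spec hu
        have hlen2 : (q.takeUntil u hu).length + (q.dropUntil u hu).length = q.length := by
          rw [← SimpleGraph.Walk.length_append, hsplit]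
        have h1 : G.dist w u ≤ (q.takeUntil u hu).length := SimpleGraph.dist_le _
        have h2 : G.dist u v ≤ (q.dropUntil u hu).length := SimpleGraph.dist_le _
        have h3 : G.dist w u = 1 := SimpleGraph.dist_eq_one_iff_adj.mpr hw.symm
        omega
      · -- extending gives a second path from u to v, contradicting uniqueness
        have hpath1 : (SimpleGraph.Walk.cons hw q).IsPath := hq.cons hu
        have hpath2 : (SimpleGraph.Walk.cons h p').IsPath := hp
        have heq := hacyc.path_unique ⟨SimpleGraph.Walk.cons hw q, hpath1⟩
          ⟨SimpleGraph.Walk.cons h p', hpath2⟩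
        have heq' : (SimpleGraph.Walk.cons hw q) = (SimpleGraph.Walk.cons h p') :=
          congrArg Subtype.val heq
        have : (SimpleGraph.Walk.cons hw q).getVert 1 = (SimpleGraph.Walk.cons h p').getVert 1 := by
          rw [heq']
        simp only [SimpleGraph.Walk.getVert_cons_succ, SimpleGraph.Walk.getVert_zero] at this
        exact hwne this
    omega

lemma card_walk_eq {V : Type*} [DecidableEq V] (d : ℕ) (G : SimpleGraph V)
    [∀ w : V, Fintype (G.neighborSet w)]
    (hconn : G.Connected) (hacyc : G.IsAcyclic)
    (hreg : ∀ w : V, G.degree w = d) :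
    ∀ (ℓ : ℕ) (u v : V),
      Fintype.card {p : G.Walk u v // p.length = ℓ} = gcount d ℓ (G.dist u v) := by
  intro ℓ
  induction ℓ with
  | zero =>
    intro u v
    by_cases huv : u = v
    · subst huv
      rw [SimpleGraph.dist_self]
      have : Unique {p : G.Walk u u // p.length = 0} := by
        refine ⟨⟨⟨.nil, rfl⟩⟩, fun ⟨p, hp⟩ => ?_⟩
        have := SimpleGraph.Walk.nil_iff_eq_nil.mp (SimpleGraph.Walk.length_eq_zero_iff.mp hp)
        subst this
        rfl
      rw [Fintype.card_unique]
      rfl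
    · have : IsEmpty {p : G.Walk u v // p.length = 0} := by
        refine ⟨fun ⟨p, hp⟩ => huv (SimpleGraph.Walk.eq_of_length_eq_zero hp)⟩
      rw [Fintype.card_eq_zero]
      obtain ⟨k, hk⟩ := Nat.exists_eq_succ_of_ne_zero
        (Nat.pos_iff_ne_zero.mp (hconn.pos_dist_of_ne huv))
      rw [hk]
      rfl
  | succ ℓ ih =>
    intro u v
    rw [Fintype.card_congr (consEquiv G u v ℓ)]
    rw [Fintype.card_sigma]
    have hsum : ∑ w : G.neighborSet u, Fintype.card {p : G.Walk (w : V) v // p.length = ℓ}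
        = ∑ w : G.neighborSet u, gcount d ℓ (G.dist (w : V) v) := by
      refine Finset.sum_congr rfl fun w _ => ih (w : V) v
    rw [hsum]
    have hsum2 : ∑ w : G.neighborSet u, gcount d ℓ (G.dist (w : V) v)
        = ∑ w ∈ G.neighborFinset u, gcount d ℓ (G.dist w v) := by
      rw [SimpleGraph.neighborFinset_def]
      exact Finset.sum_set_coe (f := fun w => gcount d ℓ (G.dist w v)) _
    rw [hsum2]
    by_cases huv : u = v
    · subst huv
      rw [SimpleGraph.dist_self]
      have hall : ∀ w ∈ G.neighborFinset u, gcount d ℓ (G.dist w u) = gcount d ℓ 1 := by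
        intro w hw
        rw [SimpleGraph.mem_neighborFinset] at hw
        rw [SimpleGraph.dist_eq_one_iff_adj.mpr hw.symm]
      rw [Finset.sum_congr rfl hall, Finset.sum_const, smul_eq_mul]
      have : (G.neighborFinset u).card = d := by rw [← hreg u]; rfl
      rw [this]
      rfl
    · obtain ⟨k, hk⟩ := Nat.exists_eq_succ_of_ne_zero
        (Nat.pos_iff_ne_zero.mp (hconn.pos_dist_of_ne huv))
      obtain ⟨w₀, hw₀adj, hw₀dist, hother⟩ := exists_toward hconn hacyc huv
      have hw₀mem : w₀ ∈ G.neighborFinset u := (SimpleGraph.mem_neighborFinset _ _ _).mpr hw₀adj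
      rw [← Finset.add_sum_erase _ _ hw₀mem]
      have hrest : ∀ w ∈ (G.neighborFinset u).erase w₀,
          gcount d ℓ (G.dist w v) = gcount d ℓ (k + 2) := by
        intro w hw
        obtain ⟨hne', hwmem⟩ := Finset.mem_erase.mp hw
        rw [SimpleGraph.mem_neighborFinset] at hwmem
        rw [hother w hwmem hne', hk]
      rw [Finset.sum_congr rfl hrest, Finset.sum_const, smul_eq_mul]
      have hcard : ((G.neighborFinset u).erase w₀).card = d - 1 := by
        rw [Finset.card_erase_of_mem hw₀mem]
        have : (G.neighborFinset u).card = d := by rw [← hreg u]; rfl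
        rw [this]
      rw [hcard, hw₀dist, hk]
      simp only [Nat.succ_sub_one]
      rfl

/-- On a `d`-regular tree, for a vertex `v₁` and an adjacent vertex `v₂`, and `n ≥ 1`,
the number of closed walks of length `2n` at `v₁` equals `d` times the number of walks
of length `2n - 1` from `v₁` to `v₂`. -/
theorem stmt_5 (d : ℕ) (hd : 2 ≤ d) {V : Type*} (G : SimpleGraph V)
    [∀ w : V, Fintype (G.neighborSet w)]
    (hconn : G.Connected) (hacyc : G.IsAcyclic)
    (hreg : ∀ w : V, G.degree w = d)
    (v₁ v₂ : V) (hadj : G.Adj v₁ v₂) (n : ℕ) (hn : 1 ≤ n) :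
    Nat.card {p : G.Walk v₁ v₁ // p.length = 2 * n} =
      d * Nat.card {p : G.Walk v₁ v₂ // p.length = 2 * n - 1} := by
  classical
  have key := card_walk_eq d G hconn hacyc hreg
  rw [Nat.card_eq_fintype_card, Nat.card_eq_fintype_card, key, key]
  rw [SimpleGraph.dist_self, SimpleGraph.dist_eq_one_iff_adj.mpr hadj]
  have h2n : 2 * n = (2 * n - 1) + 1 := by omega
  rw [h2n]
  rfl
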